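/- Let n ≥ 1, let q be a prime dividing g(n), and let p′ and p″ be two primes, with p′, p″, q pairwise distinct and q ≥ p′ + p″. Then p′ divides g(n) or p″ divides g(n). -/

import Mathlib

/-- Landau's function: the maximal order of a permutation of the symmetric group on `n` letters. -/
noncomputable def landau (n : ℕ) : ℕ :=
  Finset.univ.sup fun σ : Equiv.Perm (Fin n) => orderOf σ

/-- The largest prime factor of `m` (0 if `m` has no prime factor). -/
def maxPrimeFac (m : ℕ) : ℕ := m.primeFactors.sup id

/-- A prime dividing the lcm of a multiset divides some element. -/
lemma prime_dvd_multiset_lcm {q : ℕ} (hq : q.Prime) :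
    ∀ (s : Multiset ℕ), q ∣ s.lcm → ∃ m ∈ s, q ∣ m := by
  intro s
  induction s using Multiset.induction with
  | empty => intro h; simp [Multiset.lcm_zero] at h; exact absurd h hq.one_lt.ne'
  | cons a s ih =>
    intro h
    rw [Multiset.lcm_cons] at h
    have : q ∣ a * s.lcm := h.trans (Nat.lcm_dvd_mul a s.lcm)
    rcases (hq.dvd_mul).mp this with h' | h'
    · exact ⟨a, Multiset.mem_cons_self a s, h'⟩
    · obtain ⟨m, hm, hmd⟩ := ih h'
      exact ⟨m, Multiset.mem_cons_of_mem hm, hmd⟩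

lemma aux_contra2 {a b A0 : ℕ} (ha : 2 ≤ a) (hb : a < b) (hA0 : a ≤ A0)
    (hE : A0 * b + 2 ≤ A0 * a + b) : False := by
  obtain ⟨c, rfl⟩ := Nat.exists_eq_add_of_le ha
  obtain ⟨d, rfl⟩ := Nat.exists_eq_add_of_le hA0
  obtain ⟨e, rfl⟩ := Nat.exists_eq_add_of_lt hb
  nlinarith [Nat.zero_le (c * e), Nat.zero_le (d * e)]

/-- For `a < b` with `a ≥ 2` and a prime `q ≥ a + b`, there is a power `a^i` with
`a^i + b ≤ q < a^i * b`. -/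
lemma exists_pow_add_le_lt_mul {a b q : ℕ} (ha : 2 ≤ a) (hb : a < b)
    (hq : q.Prime) (hsum : a + b ≤ q) :
    ∃ i, 1 ≤ i ∧ a ^ i + b ≤ q ∧ q < a ^ i * b := by
  have hP1 : a ^ 1 + b ≤ q := by simpa using hsum
  have h1q : 1 ≤ q := hq.one_le
  set i := Nat.findGreatest (fun i => a ^ i + b ≤ q) q with hidef
  have hi1 : 1 ≤ i := Nat.le_findGreatest h1q hP1
  have hPi : a ^ i + b ≤ q := Nat.findGreatest_spec (P := fun i => a ^ i + b ≤ q) h1q hP1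
  have hiq : i < q := by
    rcases lt_or_eq_of_le (Nat.findGreatest_le (P := fun i => a ^ i + b ≤ q) q) with h | h
    · exact h
    · exfalso
      have h2 : q < 2 ^ q := Nat.lt_two_pow_self (n := q)
      have h3 : 2 ^ q ≤ a ^ q := Nat.pow_le_pow_left ha q
      have := hPi
      rw [hidef, h] at this
      omega
  have hnot : ¬ (a ^ (i + 1) + b ≤ q) :=
    Nat.findGreatest_is_greatest (P := fun i => a ^ i + b ≤ q) (n := q) (k := i + 1)
      (by omega) (by omega)
  refine ⟨i, hi1, hPi, ?_⟩
  by_contra hcon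
  push_neg at hcon
  have haq : a ^ i * b ≠ q := by
    intro he
    have hadvd : a ∣ q := he ▸ Dvd.dvd.mul_right (dvd_pow_self a (by omega)) b
    rcases (Nat.Prime.eq_one_or_self_of_dvd hq a hadvd) with h' | h' <;> omega
  have hA0a : a ≤ a ^ i := Nat.le_self_pow (by omega) a
  have key1 : a ^ i * b + 1 ≤ q := Nat.succ_le_of_lt (lt_of_le_of_ne hcon haq)
  have key2 : q < a ^ (i + 1) + b := by omega
  rw [pow_succ] at key2
  set A0 := a ^ i with hA0
  have hE : A0 * b + 2 ≤ A0 * a + b := by linarith [key1, key2]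
  exact aux_contra2 ha hb hA0a hE

/-- Symmetric version for two distinct primes. -/
lemma exists_pows {p₁ p₂ q : ℕ} (hp₁ : p₁.Prime) (hp₂ : p₂.Prime) (hq : q.Prime)
    (h₁₂ : p₁ ≠ p₂) (hsum : p₁ + p₂ ≤ q) :
    ∃ i j, 1 ≤ i ∧ 1 ≤ j ∧ p₁ ^ i + p₂ ^ j ≤ q ∧ q < p₁ ^ i * p₂ ^ j := by
  rcases lt_or_gt_of_ne h₁₂ with h | h
  · obtain ⟨i, hi, h1, h2⟩ := exists_pow_add_le_lt_mul hp₁.two_le h hq hsum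
    exact ⟨i, 1, hi, le_refl 1, by simpa using h1, by simpa using h2⟩
  · obtain ⟨j, hj, h1, h2⟩ := exists_pow_add_le_lt_mul hp₂.two_le h hq (by omega)
    refine ⟨1, j, le_refl 1, hj, ?_, ?_⟩
    · rw [pow_one]; omega
    · rw [pow_one, mul_comm]; exact h2

set_option maxHeartbeats 1600000

lemma aux_add_le_mul {x y : ℕ} (hx : 2 ≤ x) (hy : 2 ≤ y) : y + x ≤ x * y := by
  have h1 : 2 * y ≤ x * y := Nat.mul_le_mul_right y hx
  have h2 : x * 2 ≤ x * y := Nat.mul_le_mul_left x hy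
  linarith

/-- If q divides g(n) and p₁, p₂, q are pairwise distinct primes with q ≥ p₁ + p₂,
then p₁ or p₂ divides g(n). -/
theorem stmt6 (n q p₁ p₂ : ℕ) (hn : 1 ≤ n) (hq : q.Prime) (hqd : q ∣ landau n)
    (hp₁ : p₁.Prime) (hp₂ : p₂.Prime) (h₁₂ : p₁ ≠ p₂) (h₁q : p₁ ≠ q) (h₂q : p₂ ≠ q)
    (hsum : p₁ + p₂ ≤ q) :
    p₁ ∣ landau n ∨ p₂ ∣ landau n := by
  by_contra hcon
  push_neg at hcon
  obtain ⟨hnp₁, hnp₂⟩ := hcon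
  obtain ⟨i, j, hi1, hj1, hPsum, hPprod⟩ := exists_pows hp₁ hp₂ hq h₁₂ hsum
  set P₁ := p₁ ^ i with hP₁
  set P₂ := p₂ ^ j with hP₂
  have hP₁2 : 2 ≤ P₁ := by
    calc 2 ≤ p₁ := hp₁.two_le
    _ ≤ p₁ ^ i := Nat.le_self_pow (by omega) p₁
  have hP₂2 : 2 ≤ P₂ := by
    calc 2 ≤ p₂ := hp₂.two_le
    _ ≤ p₂ ^ j := Nat.le_self_pow (by omega) p₂
  set g := landau n with hgdef
  -- get a permutation achieving the sup
  obtain ⟨σ, -, hσ⟩ := Finset.exists_mem_eq_sup (Finset.univ : Finset (Equiv.Perm (Fin n)))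
    Finset.univ_nonempty (fun σ => orderOf σ)
  have hgσ : g = orderOf σ := by rw [hgdef]; unfold landau; exact hσ
  have hgpos : 0 < g := by rw [hgσ]; exact orderOf_pos σ
  have hmax : ∀ ρ : Equiv.Perm (Fin n), orderOf ρ ≤ g := by
    intro ρ
    rw [hgdef]; unfold landau
    exact Finset.le_sup (f := fun σ : Equiv.Perm (Fin n) => orderOf σ) (Finset.mem_univ ρ)
  clear_value g
  clear hgdef hσ
  set s := σ.cycleType with hs
  have hglcm : s.lcm = g := by rw [Equiv.Perm.lcm_cycleType, hgσ]
  obtain ⟨m, hms, hqm⟩ := prime_dvd_multiset_lcm hq s (hglcm ▸ hqd)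
  have hm2 : 2 ≤ m := Equiv.Perm.two_le_of_mem_cycleType hms
  have hqpos : 0 < q := hq.pos
  obtain ⟨k, hk⟩ := hqm
  have hkpos : 0 < k := by
    rcases Nat.eq_zero_or_pos k with h | h
    · rw [h, mul_zero] at hk; omega
    · exact h
  -- L = lcm of the rest
  set L := (s.erase m).lcm with hL
  clear_value L
  have hcons : m ::ₘ s.erase m = s := Multiset.cons_erase hms
  have hslcm : s.lcm = Nat.lcm m L := by
    rw [← lcm_eq_nat_lcm, ← hcons, Multiset.lcm_cons, hL]
  -- g divides q * lcm k L
  have hgdvd : g ∣ q * Nat.lcm k L := by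
    rw [← hglcm, hslcm]
    apply Nat.lcm_dvd
    · rw [hk]; exact Nat.mul_dvd_mul_left q (Nat.dvd_lcm_left k L)
    · exact Dvd.dvd.trans (Nat.dvd_lcm_right k L) (dvd_mul_left _ q)
  obtain ⟨A, hA⟩ := hqd
  have hgA : g = q * A := hA
  have hApos : 0 < A := by
    rcases Nat.eq_zero_or_pos A with h | h
    · rw [h, mul_zero] at hgA; omega
    · exact h
  have hAdvd : A ∣ Nat.lcm k L := by
    have := hgdvd
    rw [hgA] at this
    exact (Nat.mul_dvd_mul_iff_left hqpos).mp this
  -- build the new cycle type T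
  have hsumn : s.sum ≤ n := by
    have := (Equiv.Perm.sum_cycleType σ) ▸ (Finset.card_le_univ σ.support)
    simpa using this
  have hssum : s.sum = m + (s.erase m).sum := by
    have := Multiset.sum_cons m (s.erase m)
    rw [hcons] at this
    omega
  -- choose T
  set T : Multiset ℕ := if k = 1 then P₁ ::ₘ P₂ ::ₘ s.erase m else k ::ₘ P₁ ::ₘ P₂ ::ₘ s.erase m
    with hT
  clear_value T
  have hT2 : ∀ a ∈ T, 2 ≤ a := by
    intro a ha
    rw [hT] at ha
    split_ifs at ha with hk1
    · rcases Multiset.mem_cons.mp ha with rfl | ha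
      · exact hP₁2
      rcases Multiset.mem_cons.mp ha with rfl | ha
      · exact hP₂2
      · exact Equiv.Perm.two_le_of_mem_cycleType (Multiset.mem_of_mem_erase ha)
    · rcases Multiset.mem_cons.mp ha with rfl | ha
      · omega
      rcases Multiset.mem_cons.mp ha with rfl | ha
      · exact hP₁2
      rcases Multiset.mem_cons.mp ha with rfl | ha
      · exact hP₂2
      · exact Equiv.Perm.two_le_of_mem_cycleType (Multiset.mem_of_mem_erase ha)
  have hTsum : T.sum ≤ n := by
    rw [hT]
    split_ifs with hk1
    · have : m = q := by rw [hk, hk1, mul_one]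
      simp only [Multiset.sum_cons]
      omega
    · have hk2 : 2 ≤ k := by omega
      have hq2 : 2 ≤ q := hq.two_le
      have : k + q ≤ m := by rw [hk]; exact aux_add_le_mul hq2 hk2
      simp only [Multiset.sum_cons]
      omega
  -- get a permutation with this cycle type
  obtain ⟨τ, hτ⟩ := (Equiv.Perm.exists_with_cycleType_iff (α := Fin n)).mpr
    ⟨by simpa using hTsum, hT2⟩
  have hτle : orderOf τ ≤ g := hmax τ
  have hτlcm : T.lcm = orderOf τ := by rw [← hτ, Equiv.Perm.lcm_cycleType]
  -- divisibility into T.lcm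
  have hkLdvd : Nat.lcm k L ∣ T.lcm := by
    rw [hT]
    split_ifs with hk1
    · have h1 : Nat.lcm k L = L := by rw [hk1, Nat.lcm, Nat.one_mul, Nat.gcd_one_left, Nat.div_one]
      rw [h1]
      simp only [Multiset.lcm_cons, ← lcm_eq_nat_lcm]
      rw [← hL]
      exact (dvd_lcm_right P₂ _).trans (dvd_lcm_right P₁ _)
    · simp only [Multiset.lcm_cons, ← lcm_eq_nat_lcm]
      rw [← hL]
      exact lcm_dvd (dvd_lcm_left _ _)
        ((dvd_lcm_right P₂ _).trans ((dvd_lcm_right P₁ _).trans (dvd_lcm_right _ _)))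
  have hAT : A ∣ T.lcm := hAdvd.trans hkLdvd
  have hp₁T : P₁ ∣ T.lcm := by
    rw [hT]; split_ifs <;> simp only [Multiset.lcm_cons]
    · exact dvd_lcm_left _ _
    · exact (dvd_lcm_left P₁ _).trans (dvd_lcm_right _ _)
  have hp₂T : P₂ ∣ T.lcm := by
    rw [hT]; split_ifs <;> simp only [Multiset.lcm_cons]
    · exact (dvd_lcm_left P₂ _).trans (dvd_lcm_right _ _)
    · exact ((dvd_lcm_left P₂ _).trans (dvd_lcm_right P₁ _)).trans (dvd_lcm_right _ _)
  -- coprimality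
  have hAg : A ∣ g := hgA ▸ dvd_mul_left A q
  have hcop1 : Nat.Coprime P₁ A :=
    Nat.Coprime.pow_left i ((hp₁.coprime_iff_not_dvd).mpr (fun h => hnp₁ (h.trans hAg)))
  have hd1 : P₁ * A ∣ T.lcm := hcop1.mul_dvd_of_dvd_of_dvd hp₁T hAT
  have hcop2 : Nat.Coprime P₂ (P₁ * A) :=
    Nat.Coprime.pow_left j (Nat.Coprime.mul_right
      (Nat.Coprime.pow_right i ((Nat.coprime_primes hp₂ hp₁).mpr (Ne.symm h₁₂)))
      ((hp₂.coprime_iff_not_dvd).mpr (fun h => hnp₂ (h.trans hAg))))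
  have hd2 : P₂ * (P₁ * A) ∣ T.lcm := hcop2.mul_dvd_of_dvd_of_dvd hp₂T hd1
  have hτpos : 0 < T.lcm := by rw [hτlcm]; exact orderOf_pos τ
  have hle : P₂ * (P₁ * A) ≤ T.lcm := Nat.le_of_dvd hτpos hd2
  have hTg : T.lcm ≤ g := by rw [hτlcm]; exact hτle
  -- contradiction : P₁ * P₂ > q
  have hfin : g < P₂ * (P₁ * A) := by
    calc g = q * A := hgA
    _ < (q + 1) * A := mul_lt_mul_of_pos_right (lt_add_one q) hApos
    _ ≤ P₁ * P₂ * A := Nat.mul_le_mul_right A hPprod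
    _ = P₂ * (P₁ * A) := by ring
  exact absurd (hle.trans hTg) (not_le.mpr hfin)
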